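/- Let H_1, …, H_k be connected graphs, each with minimum degree at least 2, realized as subgraphs of a common complete graph (i.e., each H_i is given by a set of edges on a common vertex set, with vertex set V(H_i) the set of endpoints of its edges). Let G be their union (vertex set ⋃_i V(H_i), edge set ⋃_i E(H_i)), and let E_sing be the set of edges that belong to exactly one of the edge sets E(H_1), …, E(H_k). Then |V(G)| − |E_sing|/2 ≤ (1/2)·Σ_{i=1}^k |V(H_i)|. -/

import Mathlib

open SimpleGraph Finset

theorem overlay_vertex_edge_inequality {V : Type} [Fintype V] (k : ℕ)
    (H : Fin k → SimpleGraph V)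
    -- each `H i`, viewed as a graph on its support (the endpoints of its edges),
    -- is connected:
    (hconn : ∀ i, ((H i).induce (H i).support).Connected)
    -- each `H i` has minimum degree at least 2 (on its support):
    (hdeg : ∀ i, ∀ v ∈ (H i).support, 2 ≤ Nat.card ((H i).neighborSet v)) :
    (Nat.card (⨆ i, H i).support : ℝ) -
        (Nat.card {e : Sym2 V // ∃! i : Fin k, e ∈ (H i).edgeSet} : ℝ) / 2 ≤
      (1 / 2) * ∑ i, (Nat.card (H i).support : ℝ) := by
  classical
  set S : Finset (Sym2 V) := univ.filter (fun e => ∃! i : Fin k, e ∈ (H i).edgeSet) with hS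
  set supG : Finset V := univ.filter (fun v => v ∈ (⨆ i, H i).support) with hsupG
  set sF : Fin k → Finset V := fun i => univ.filter (fun v => v ∈ (H i).support) with hsF
  set L : Finset V := univ.filter (fun v => ∃! i : Fin k, v ∈ (H i).support) with hL
  -- Lemma A: each lonely vertex is incident to at least 2 singleton edges
  have hA : ∀ v ∈ L, 2 ≤ (S.filter (fun e => v ∈ e)).card := by
    intro v hv
    rw [hL, mem_filter] at hv
    obtain ⟨-, i, hvi, huniq⟩ := hv
    have hsub : ∀ w ∈ ((H i).neighborSet v).toFinset,
        s(v, w) ∈ S.filter (fun e => v ∈ e) := by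
      intro w hw
      rw [Set.mem_toFinset, mem_neighborSet] at hw
      rw [mem_filter, hS, mem_filter]
      refine ⟨⟨mem_univ _, i, hw, ?_⟩, Sym2.mem_mk_left v w⟩
      intro j hj
      rw [SimpleGraph.mem_edgeSet] at hj
      exact huniq j ⟨w, hj⟩
    have hinj : Set.InjOn (fun w => s(v, w)) ((H i).neighborSet v).toFinset := by
      intro a _ b _ hab
      simp only [Sym2.eq, Sym2.rel_iff', Prod.mk.injEq, Prod.swap_prod_mk] at hab
      rcases hab with ⟨-, h⟩ | ⟨h1, h2⟩
      · exact h
      · exact h2.trans h1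
    calc 2 ≤ Nat.card ((H i).neighborSet v) := hdeg i v hvi
      _ = ((H i).neighborSet v).toFinset.card := by
            rw [Nat.card_eq_fintype_card, Set.toFinset_card]
      _ ≤ (S.filter (fun e => v ∈ e)).card :=
            Finset.card_le_card_of_injOn _ hsub hinj
  -- Lemma B: each edge contains at most 2 lonely vertices
  have hB : ∀ e ∈ S, (L.filter (fun v => v ∈ e)).card ≤ 2 := by
    intro e _
    induction e using Sym2.ind with
    | _ a b =>
      have hsub : (L.filter (fun v => v ∈ s(a, b))) ⊆ {a, b} := by
        intro v hv
        rw [mem_filter, Sym2.mem_iff] at hv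
        rcases hv.2 with rfl | rfl <;> simp
      calc (L.filter (fun v => v ∈ s(a, b))).card ≤ ({a, b} : Finset V).card :=
            card_le_card hsub
        _ ≤ ({b} : Finset V).card + 1 := card_insert_le _ _
        _ ≤ 2 := by simp
  have hLS : L.card ≤ S.card := by
    have := Finset.card_mul_le_card_mul (fun v e => v ∈ e) hA hB
    omega
  -- L ⊆ supG
  have hLsub : L ⊆ supG := by
    intro v hv
    rw [hL, mem_filter] at hv
    obtain ⟨-, i, ⟨w, hw⟩, -⟩ := hv
    rw [hsupG, mem_filter]
    exact ⟨mem_univ _, w, le_iSup H i hw⟩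
  -- multiplicity of a vertex
  have hswap : ∑ i, (sF i).card
      = ∑ v, (univ.filter (fun i : Fin k => v ∈ (H i).support)).card := by
    simp only [hsF, card_filter]
    rw [Finset.sum_comm]
  -- each vertex of supG that is not lonely has multiplicity ≥ 2
  have hmul2 : ∀ v ∈ supG.filter (fun v => v ∉ L),
      2 ≤ (univ.filter (fun i : Fin k => v ∈ (H i).support)).card := by
    intro v hv
    rw [mem_filter] at hv
    obtain ⟨hvG, hvL⟩ := hv
    rw [hsupG, mem_filter] at hvG
    obtain ⟨-, w, hw⟩ := hvG
    replace hw : (⨆ i, H i).Adj v w := hw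
    rw [iSup_adj] at hw
    obtain ⟨i, hi⟩ := hw
    have hmem : i ∈ univ.filter (fun i : Fin k => v ∈ (H i).support) := by
      rw [mem_filter]; exact ⟨mem_univ _, w, hi⟩
    have h1 : 1 ≤ (univ.filter (fun i : Fin k => v ∈ (H i).support)).card :=
      card_pos.mpr ⟨i, hmem⟩
    rcases Nat.lt_or_ge (univ.filter (fun i : Fin k => v ∈ (H i).support)).card 2 with h | h
    · exfalso
      have hone : (univ.filter (fun i : Fin k => v ∈ (H i).support)).card = 1 := by omega
      obtain ⟨i₀, hi₀⟩ := card_eq_one.mp hone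
      apply hvL
      rw [hL, mem_filter]
      refine ⟨mem_univ _, i₀, ?_, ?_⟩
      · have : i₀ ∈ univ.filter (fun i : Fin k => v ∈ (H i).support) := by
          rw [hi₀]; exact mem_singleton_self _
        exact (mem_filter.mp this).2
      · intro j hj
        have : j ∈ univ.filter (fun i : Fin k => v ∈ (H i).support) := by
          rw [mem_filter]; exact ⟨mem_univ _, hj⟩
        rw [hi₀, mem_singleton] at this
        exact this
    · exact h
  have hmul1 : ∀ v ∈ supG.filter (fun v => v ∈ L),
      1 ≤ (univ.filter (fun i : Fin k => v ∈ (H i).support)).card := by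
    intro v hv
    rw [mem_filter] at hv
    have := hv.2
    rw [hL, mem_filter] at this
    obtain ⟨-, i, hi, -⟩ := this
    exact card_pos.mpr ⟨i, mem_filter.mpr ⟨mem_univ _, hi⟩⟩
  -- key counting inequality
  have hfilterL : supG.filter (fun v => v ∈ L) = L := by
    rw [Finset.filter_mem_eq_inter, Finset.inter_eq_right.mpr hLsub]
  have key : 2 * supG.card ≤ S.card + ∑ i, (sF i).card := by
    have hsum1 : (supG.filter (fun v => v ∈ L)).card * 1
        ≤ ∑ v ∈ supG.filter (fun v => v ∈ L),
            (univ.filter (fun i : Fin k => v ∈ (H i).support)).card :=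
      Finset.card_nsmul_le_sum _ _ _ hmul1
    have hsum2 : (supG.filter (fun v => v ∉ L)).card * 2
        ≤ ∑ v ∈ supG.filter (fun v => v ∉ L),
            (univ.filter (fun i : Fin k => v ∈ (H i).support)).card :=
      Finset.card_nsmul_le_sum _ _ _ hmul2
    have hsplit : ∑ v ∈ supG.filter (fun v => v ∈ L),
            (univ.filter (fun i : Fin k => v ∈ (H i).support)).card
        + ∑ v ∈ supG.filter (fun v => v ∉ L),
            (univ.filter (fun i : Fin k => v ∈ (H i).support)).card
        = ∑ v ∈ supG, (univ.filter (fun i : Fin k => v ∈ (H i).support)).card :=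
      Finset.sum_filter_add_sum_filter_not _ _ _
    have hle : ∑ v ∈ supG, (univ.filter (fun i : Fin k => v ∈ (H i).support)).card
        ≤ ∑ v, (univ.filter (fun i : Fin k => v ∈ (H i).support)).card :=
      Finset.sum_le_sum_of_subset (subset_univ _)
    have hcards : (supG.filter (fun v => v ∈ L)).card
        + (supG.filter (fun v => v ∉ L)).card = supG.card :=
      Finset.card_filter_add_card_filter_not _
    rw [hfilterL] at hsum1 hcards hsplit
    rw [hswap]
    omega
  -- translate Nat.card's to finset cards
  have h1 : Nat.card (⨆ i, H i).support = supG.card := by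
    rw [Nat.card_eq_fintype_card, hsupG]
    exact Fintype.card_subtype _
  have h2 : Nat.card {e : Sym2 V // ∃! i : Fin k, e ∈ (H i).edgeSet} = S.card := by
    rw [Nat.card_eq_fintype_card, hS]
    exact Fintype.card_subtype _
  have h3 : ∀ i, Nat.card (H i).support = (sF i).card := by
    intro i
    rw [Nat.card_eq_fintype_card, hsF]
    exact Fintype.card_subtype _
  rw [h1, h2]
  simp only [h3]
  have keyR : (2 : ℝ) * supG.card ≤ S.card + ∑ i, ((sF i).card : ℝ) := by
    have := key
    push_cast
    exact_mod_cast key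
  linarith
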